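/- For all natural numbers i ≥ 1 and n ≥ 16, A_i(n) ≤ f_{i+6}^{(2)}(n), where f_{i+6}^{(2)} denotes the two-fold iterate of f_{i+6}. -/

import Mathlib

/-- `f i` for `i ≥ 1`: `f 1 n = n + 1`, `f (i+1) n = (f i)^[⌊√n/2⌋] n`. -/
def f : ℕ → ℕ → ℕ
  | 0, n => n
  | 1, n => n + 1
  | i + 2, n => (f (i + 1))^[Nat.sqrt n / 2] n

/-- Ackermann approximations: `A 1 n = n + 1`, `A (i+1) n = (A i)^[n] n`. -/
def A : ℕ → ℕ → ℕ
  | 0, n => n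
  | 1, n => n + 1
  | i + 2, n => (A (i + 1))^[n] n

lemma le_iterate {g : ℕ → ℕ} (hid : ∀ x, x ≤ g x) : ∀ t n, n ≤ g^[t] n := by
  intro t
  induction t with
  | zero => intro n; simp
  | succ t ih => intro n; rw [Function.iterate_succ_apply]; exact (hid n).trans (ih (g n))

lemma iterate_le_iterate {g : ℕ → ℕ} (hid : ∀ x, x ≤ g x) (hmono : Monotone g)
    {a b n m : ℕ} (hab : a ≤ b) (hnm : n ≤ m) : g^[a] n ≤ g^[b] m := by
  calc g^[a] n ≤ g^[a] m := hmono.iterate a hnm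
    _ ≤ g^[b] m := by
        obtain ⟨c, rfl⟩ := Nat.exists_eq_add_of_le hab
        rw [Nat.add_comm, Function.iterate_add_apply]
        exact le_iterate (fun x => hid x) c _

lemma k_mono : Monotone (fun n => Nat.sqrt n / 2) :=
  fun _ _ h => Nat.div_le_div_right (Nat.sqrt_le_sqrt h)

lemma f_succ (j n : ℕ) : f (j + 2) n = (f (j + 1))^[Nat.sqrt n / 2] n := rfl

lemma f_id : ∀ j n, n ≤ f (j + 1) n := by
  intro j
  induction j with
  | zero => intro n; exact Nat.le_succ n
  | succ j ih => intro n; rw [f_succ]; exact le_iterate ih _ n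

lemma f_mono : ∀ j, Monotone (f (j + 1)) := by
  intro j
  induction j with
  | zero => exact fun a b h => Nat.succ_le_succ h
  | succ j ih =>
      intro a b h
      rw [f_succ, f_succ]
      exact iterate_le_iterate (f_id j) ih (k_mono h) h

lemma f_index_step (j n : ℕ) (hn : 4 ≤ n) : f (j + 1) n ≤ f (j + 2) n := by
  rw [f_succ]
  have hk : 1 ≤ Nat.sqrt n / 2 := by
    have : 2 ≤ Nat.sqrt n := by rw [Nat.le_sqrt]; omega
    omega
  calc f (j + 1) n = (f (j + 1))^[1] n := rfl
    _ ≤ (f (j + 1))^[Nat.sqrt n / 2] n :=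
        iterate_le_iterate (f_id j) (f_mono j) hk le_rfl

lemma f_index_le {j J : ℕ} (h : j ≤ J) (n : ℕ) (hn : 4 ≤ n) :
    f (j + 1) n ≤ f (J + 1) n := by
  induction J with
  | zero =>
      have : j = 0 := by omega
      subst this; rfl
  | succ J ih =>
      rcases Nat.lt_or_ge j (J + 1) with h' | h'
      · exact (ih (by omega)).trans (f_index_step J n hn)
      · have : j = J + 1 := by omega
        subst this; rfl

lemma f_one_iter (t n : ℕ) : (f 1)^[t] n = n + t := by
  induction t with
  | zero => rfl
  | succ t ih => rw [Function.iterate_succ_apply', ih]; rfl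

lemma f_two (n : ℕ) : f 2 n = n + Nat.sqrt n / 2 := by
  rw [f_succ, f_one_iter]

lemma f_gain : ∀ j n, n + (Nat.sqrt n / 2) ^ (j + 1) ≤ f (j + 2) n := by
  intro j
  induction j with
  | zero => intro n; rw [f_two]; simp
  | succ j ih =>
      intro n
      rw [f_succ]
      have key : ∀ t, n + t * (Nat.sqrt n / 2) ^ (j + 1) ≤ (f (j + 2))^[t] n := by
        intro t
        induction t with
        | zero => simp
        | succ t iht =>
            rw [Function.iterate_succ_apply']
            set v := (f (j + 2))^[t] n with hv
            have hnv : n ≤ v := le_iterate (f_id (j + 1)) t n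
            calc n + (t + 1) * (Nat.sqrt n / 2) ^ (j + 1)
                = (n + t * (Nat.sqrt n / 2) ^ (j + 1)) + (Nat.sqrt n / 2) ^ (j + 1) := by ring
              _ ≤ v + (Nat.sqrt v / 2) ^ (j + 1) := by
                  have := k_mono hnv
                  simp only at this
                  exact Nat.add_le_add iht (Nat.pow_le_pow_left this _)
              _ ≤ f (j + 2) v := ih v
      calc n + (Nat.sqrt n / 2) ^ (j + 2)
          = n + (Nat.sqrt n / 2) * (Nat.sqrt n / 2) ^ (j + 1) := by ring
        _ ≤ (f (j + 2))^[Nat.sqrt n / 2] n := key _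


lemma double4 {n : ℕ} (hn : 169 ≤ n) : 2 * n ≤ f 4 n := by
  have hg : n + (Nat.sqrt n / 2) ^ 3 ≤ f 4 n := f_gain 2 n
  set s := Nat.sqrt n with hsdef
  set k := s / 2 with hk
  have hs : 13 ≤ s := by rw [hsdef, Nat.le_sqrt]; omega
  have hub : n < (s + 1) * (s + 1) := Nat.lt_succ_sqrt n
  have h1 : (s + 1) * (s + 1) = s * s + 2 * s + 1 := by ring
  have hks : s ≤ 2 * k + 1 := by omega
  have h2 : s * s ≤ (2 * k + 1) * (2 * k + 1) := Nat.mul_le_mul hks hks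
  have h3 : (2 * k + 1) * (2 * k + 1) = 4 * (k * k) + 4 * k + 1 := by ring
  have hk6 : 6 ≤ k := by omega
  have h4 : 6 * k ≤ k * k := Nat.mul_le_mul_right k hk6
  have h5 : 6 * (k * k) ≤ k * (k * k) := Nat.mul_le_mul_right (k * k) hk6
  have h6 : k ^ 3 = k * (k * k) := by ring
  omega

lemma exp4 {n : ℕ} (hn : 169 ≤ n) : ∀ t, 2 ^ t * n ≤ (f 4)^[t] n := by
  intro t
  induction t with
  | zero => simp
  | succ t ih =>
      rw [Function.iterate_succ_apply']
      have hv : 169 ≤ (f 4)^[t] n := le_trans hn (le_iterate (f_id 3) t n)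
      calc 2 ^ (t + 1) * n = 2 * (2 ^ t * n) := by ring
        _ ≤ 2 * (f 4)^[t] n := by omega
        _ ≤ f 4 ((f 4)^[t] n) := double4 hv

lemma f5_exp {n : ℕ} (hn : 169 ≤ n) : 2 ^ (Nat.sqrt n / 2) * n ≤ f 5 n := by
  rw [f_succ]; exact exp4 hn _

lemma sq6 {n : ℕ} (hn : 169 ≤ n) : 16 * n ^ 2 ≤ f 6 n := by
  have hs : 13 ≤ Nat.sqrt n := by rw [Nat.le_sqrt]; omega
  have hk : 6 ≤ Nat.sqrt n / 2 := by omega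
  rw [f_succ]
  have h2 : (f 5)^[2] n ≤ (f 5)^[Nat.sqrt n / 2] n :=
    iterate_le_iterate (f_id 4) (f_mono 4) (by omega) le_rfl
  refine le_trans ?_ h2
  have hiter2 : (f 5)^[2] n = f 5 (f 5 n) := by
    rw [Function.iterate_succ_apply', Function.iterate_one]
  rw [hiter2]
  set v := f 5 n with hv
  have hv64 : 64 * n ≤ v := by
    calc 64 * n = 2 ^ 6 * n := by norm_num
      _ ≤ 2 ^ (Nat.sqrt n / 2) * n :=
          Nat.mul_le_mul_right n (Nat.pow_le_pow_right (by norm_num) hk)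
      _ ≤ v := f5_exp hn
  have hv169 : 169 ≤ v := by nlinarith
  set s := Nat.sqrt n with hsdef
  have hss : s * s ≤ n := by
    have h := Nat.sqrt_le' n
    nlinarith [h]
  have hsv : 8 * s ≤ Nat.sqrt v := by
    rw [Nat.le_sqrt]
    calc (8 * s) * (8 * s) = 64 * (s * s) := by ring
      _ ≤ 64 * n := Nat.mul_le_mul_left 64 hss
      _ ≤ v := hv64
  have hkv : 4 * s ≤ Nat.sqrt v / 2 := by omega
  have hfv : 2 ^ (4 * s) * v ≤ f 5 v := by
    calc 2 ^ (4 * s) * v ≤ 2 ^ (Nat.sqrt v / 2) * v :=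
          Nat.mul_le_mul_right v (Nat.pow_le_pow_right (by norm_num) hkv)
      _ ≤ f 5 v := f5_exp hv169
  refine le_trans ?_ hfv
  have hnub : n < 2 ^ (4 * s) := by
    have h1 : n < (s + 1) * (s + 1) := Nat.lt_succ_sqrt n
    have h2' : s + 1 < 2 ^ (s + 1) := Nat.lt_two_pow_self (n := s + 1)
    have h3 : (s + 1) * (s + 1) ≤ 2 ^ (s + 1) * 2 ^ (s + 1) :=
      Nat.mul_le_mul h2'.le h2'.le
    have h4 : 2 ^ (s + 1) * 2 ^ (s + 1) = 2 ^ (2 * s + 2) := by rw [← pow_add]; ring_nf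
    have h5 : (2 : ℕ) ^ (2 * s + 2) ≤ 2 ^ (4 * s) :=
      Nat.pow_le_pow_right (by norm_num) (by omega)
    omega
  calc 16 * n ^ 2 = 16 * n * n := by ring
    _ ≤ 16 * (2 ^ (4 * s)) * n := Nat.mul_le_mul_right n (Nat.mul_le_mul_left 16 hnub.le)
    _ = 2 ^ (4 * s) * (16 * n) := by ring
    _ ≤ 2 ^ (4 * s) * (64 * n) := Nat.mul_le_mul_left _ (by omega)
    _ ≤ 2 ^ (4 * s) * v := Nat.mul_le_mul_left _ hv64

lemma bridge7 {n : ℕ} (hn : 16 ≤ n) : 169 ≤ f 7 n := by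
  have hs4 : 4 ≤ Nat.sqrt n := by rw [Nat.le_sqrt]; omega
  have hk2 : 2 ≤ Nat.sqrt n / 2 := by omega
  have h1 : (f 6)^[2] n ≤ (f 6)^[Nat.sqrt n / 2] n :=
    iterate_le_iterate (f_id 5) (f_mono 5) hk2 le_rfl
  rw [show f 7 n = (f 6)^[Nat.sqrt n / 2] n from rfl]
  refine le_trans ?_ h1
  rw [show (f 6)^[2] n = f 6 (f 6 n) from by
    rw [Function.iterate_succ_apply', Function.iterate_one]]
  have hg1 : n + (Nat.sqrt n / 2) ^ 5 ≤ f 6 n := f_gain 4 n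
  have h32 : (2 : ℕ) ^ 5 ≤ (Nat.sqrt n / 2) ^ 5 := Nat.pow_le_pow_left hk2 5
  norm_num at h32
  set m := f 6 n with hm
  have hm48 : 48 ≤ m := by omega
  have hsm : 6 ≤ Nat.sqrt m := by rw [Nat.le_sqrt]; omega
  have hkm : 3 ≤ Nat.sqrt m / 2 := by omega
  have hg2 : m + (Nat.sqrt m / 2) ^ 5 ≤ f 6 m := f_gain 4 m
  have h243 : (3 : ℕ) ^ 5 ≤ (Nat.sqrt m / 2) ^ 5 := Nat.pow_le_pow_left hkm 5
  norm_num at h243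
  omega

lemma key8 {j n : ℕ} (hj : 8 ≤ j) (hn : 16 ≤ n) : 16 * n ^ 2 ≤ f j n := by
  obtain ⟨J, rfl⟩ : ∃ J, j = J + 1 := ⟨j - 1, by omega⟩
  have h8 : f 8 n ≤ f (J + 1) n := f_index_le (show 7 ≤ J by omega) n (by omega)
  refine le_trans ?_ h8
  have hs4 : 4 ≤ Nat.sqrt n := by rw [Nat.le_sqrt]; omega
  have hk2 : 2 ≤ Nat.sqrt n / 2 := by omega
  have h2 : (f 7)^[2] n ≤ (f 7)^[Nat.sqrt n / 2] n :=
    iterate_le_iterate (f_id 6) (f_mono 6) hk2 le_rfl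
  rw [show f 8 n = (f 7)^[Nat.sqrt n / 2] n from rfl]
  refine le_trans ?_ h2
  rw [show (f 7)^[2] n = f 7 (f 7 n) from by
    rw [Function.iterate_succ_apply', Function.iterate_one]]
  set w := f 7 n with hw
  have hw169 : 169 ≤ w := bridge7 hn
  have hwn : n ≤ w := f_id 6 n
  have h6 : f 6 w ≤ f 7 w := f_index_step 5 w (by omega)
  have hsq := sq6 hw169
  have hmono2 : 16 * n ^ 2 ≤ 16 * w ^ 2 :=
    Nat.mul_le_mul_left 16 (Nat.pow_le_pow_left hwn 2)
  omega

lemma A_id : ∀ j n, n ≤ A (j + 1) n := by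
  intro j
  induction j with
  | zero => intro n; exact Nat.le_succ n
  | succ j ih =>
      intro n
      rw [show A (j + 2) n = (A (j + 1))^[n] n from rfl]
      exact le_iterate ih n n

theorem A_le_f_iterate (i : ℕ) (hi : 1 ≤ i) (n : ℕ) (hn : 16 ≤ n) :
    A i n ≤ (f (i + 6))^[2] n := by
  induction i, hi using Nat.le_induction generalizing n with
  | base =>
      show n + 1 ≤ (f 7)^[2] n
      rw [show (f 7)^[2] n = f 7 (f 7 n) from by
        rw [Function.iterate_succ_apply', Function.iterate_one]]
      have hs4 : 4 ≤ Nat.sqrt n := by rw [Nat.le_sqrt]; omega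
      have hk2 : 2 ≤ Nat.sqrt n / 2 := by omega
      have hg : n + (Nat.sqrt n / 2) ^ 6 ≤ f 7 n := f_gain 5 n
      have h64 : (2 : ℕ) ^ 6 ≤ (Nat.sqrt n / 2) ^ 6 := Nat.pow_le_pow_left hk2 6
      norm_num at h64
      have h2 : f 7 n ≤ f 7 (f 7 n) := f_id 6 (f 7 n)
      omega
  | succ i hi ih =>
      obtain ⟨j, rfl⟩ : ∃ j, i = j + 1 := ⟨i - 1, by omega⟩
      simp only [show j + 1 + 1 + 6 = j + 8 from by omega] at *
      simp only [show j + 1 + 6 = j + 7 from by omega] at ih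
      have claim : ∀ t, (A (j + 1))^[t] n ≤ (f (j + 7))^[2 * t] n := by
        intro t
        induction t with
        | zero => simp
        | succ t iht =>
            rw [Function.iterate_succ_apply']
            have hval : 16 ≤ (A (j + 1))^[t] n :=
              le_trans hn (le_iterate (A_id j) t n)
            have h1 : A (j + 1) ((A (j + 1))^[t] n) ≤
                (f (j + 7))^[2] ((A (j + 1))^[t] n) := ih _ hval
            have h2 : (f (j + 7))^[2] ((A (j + 1))^[t] n) ≤
                (f (j + 7))^[2] ((f (j + 7))^[2 * t] n) :=
              ((f_mono (j + 6)).iterate 2) iht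
            have h3 : (f (j + 7))^[2] ((f (j + 7))^[2 * t] n) =
                (f (j + 7))^[2 * (t + 1)] n := by
              rw [show 2 * (t + 1) = 2 + 2 * t from by ring,
                Function.iterate_add_apply]
            rw [← h3]
            exact h1.trans h2
      have hA : A (j + 2) n = (A (j + 1))^[n] n := rfl
      rw [hA]
      refine le_trans (claim n) ?_
      -- (f (j+7))^[2n] n ≤ (f (j+8))^[2] n
      set m := f (j + 8) n with hm
      have hmkey : 16 * n ^ 2 ≤ m := key8 (by omega) hn
      have hsm : 4 * n ≤ Nat.sqrt m := by
        rw [Nat.le_sqrt]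
        calc 4 * n * (4 * n) = 16 * n ^ 2 := by ring
          _ ≤ m := hmkey
      have hcount : 2 * n ≤ Nat.sqrt m / 2 + Nat.sqrt n / 2 := by omega
      have hexp : (f (j + 8))^[2] n =
          (f (j + 7))^[Nat.sqrt m / 2 + Nat.sqrt n / 2] n := by
        rw [show (f (j + 8))^[2] n = f (j + 8) (f (j + 8) n) from by
          rw [Function.iterate_succ_apply', Function.iterate_one]]
        rw [show f (j + 8) (f (j + 8) n) =
          (f (j + 7))^[Nat.sqrt (f (j + 8) n) / 2] ((f (j + 7))^[Nat.sqrt n / 2] n)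
          from rfl]
        rw [← Function.iterate_add_apply]
      rw [hexp]
      exact iterate_le_iterate (f_id (j + 6)) (f_mono (j + 6)) hcount le_rfl
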